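/- Let V = W ⊕ U be a decomposition of the free right Q-module V = Q² with W projective of rank 1 and U free of rank 1, and let S ∈ M₂(Q) be the matrix of the endomorphism acting as −1 on W and +1 on U. Then S lies in sl₂(Q) = [gl₂(Q), gl₂(Q)]. -/

import Mathlib

/-- The ring `R = k[t₁^{±1}, t₂^{±1}]` of Laurent polynomials in two variables. -/
abbrev LaurentR (k : Type*) [Field k] : Type _ := AddMonoidAlgebra k (ℤ × ℤ)

/-- The variable `t₁ ∈ R`. -/
noncomputable def tOne (k : Type*) [Field k] : LaurentR k :=
  AddMonoidAlgebra.single ((1 : ℤ), (0 : ℤ)) 1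

/-- The variable `t₂ ∈ R`. -/
noncomputable def tTwo (k : Type*) [Field k] : LaurentR k :=
  AddMonoidAlgebra.single ((0 : ℤ), (1 : ℤ)) 1

/-- The map `m : Q ⊕ Q → Q` of right `Q`-modules, `(u,v) ↦ (1+i)u − (1+j)v`. -/
noncomputable def mMap (Q : Type*) [Ring Q] (i j : Q) : (Q × Q) →ₗ[Qᵐᵒᵖ] Q where
  toFun x := (1 + i) * x.1 - (1 + j) * x.2
  map_add' x y := by
    simp only [Prod.fst_add, Prod.snd_add, mul_add]
    abel
  map_smul' q x := by
    simp only [Prod.smul_fst, Prod.smul_snd, MulOpposite.smul_eq_mul_unop,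
      RingHom.id_apply, mul_assoc, sub_mul]

section Aux

variable {k : Type*} [Field k] {Q : Type*} [Ring Q] [Algebra (LaurentR k) Q]

/-- `mMap` as a `LaurentR k`-linear map. -/
noncomputable def mAux (k : Type*) [Field k] {Q : Type*} [Ring Q] [Algebra (LaurentR k) Q]
    (i j : Q) : (Q × Q) →ₗ[LaurentR k] Q where
  toFun x := (1 + i) * x.1 - (1 + j) * x.2
  map_add' x y := by
    simp only [Prod.fst_add, Prod.snd_add, mul_add]
    abel
  map_smul' r x := by
    simp only [Prod.smul_fst, Prod.smul_snd, RingHom.id_apply, smul_sub, mul_smul_comm]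

/-- A right-`Q`-linear endomorphism of `Q × Q` is `LaurentR k`-linear. -/
noncomputable def opToA (k : Type*) [Field k] {Q : Type*} [Ring Q] [Algebra (LaurentR k) Q]
    (f : (Q × Q) →ₗ[Qᵐᵒᵖ] (Q × Q)) : (Q × Q) →ₗ[LaurentR k] (Q × Q) where
  toFun := f
  map_add' := f.map_add
  map_smul' r x := by
    have h : ∀ y : Q × Q, r • y = (MulOpposite.op (algebraMap (LaurentR k) Q r)) • y := by
      intro y
      ext
      · show r • y.1 = y.1 * algebraMap (LaurentR k) Q r
        rw [Algebra.smul_def, Algebra.commutes]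
      · show r • y.2 = y.2 * algebraMap (LaurentR k) Q r
        rw [Algebra.smul_def, Algebra.commutes]
    simp only [RingHom.id_apply, h, f.map_smul]

@[simp] lemma opToA_apply (f : (Q × Q) →ₗ[Qᵐᵒᵖ] (Q × Q)) (x : Q × Q) :
    opToA k f x = f x := rfl

@[simp] lemma mAux_apply (i j : Q) (x : Q × Q) :
    mAux k i j x = (1 + i) * x.1 - (1 + j) * x.2 := rfl

end Aux

noncomputable def t2inv (k : Type*) [Field k] : LaurentR k :=
  AddMonoidAlgebra.single ((0 : ℤ), (-1 : ℤ)) 1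

noncomputable def t1inv (k : Type*) [Field k] : LaurentR k :=
  AddMonoidAlgebra.single ((-1 : ℤ), (0 : ℤ)) 1

lemma t2inv_mul (k : Type*) [Field k] : t2inv k * tTwo k = 1 := by
  rw [t2inv, tTwo, AddMonoidAlgebra.single_mul_single]
  norm_num
  rfl

lemma t1inv_mul (k : Type*) [Field k] : t1inv k * tOne k = 1 := by
  rw [t1inv, tOne, AddMonoidAlgebra.single_mul_single]
  norm_num
  rfl

lemma diagCoeffSum {A : Type*} [CommRing A] {Q : Type*} [Ring Q] [Algebra A Q]
    (i j : Q) (t1 t2 : A) (bQ : Module.Basis (Fin 4) A Q)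
    (hb0 : bQ 0 = 1) (hb1 : bQ 1 = i) (hb2 : bQ 2 = j) (hb3 : bQ 3 = i * j)
    (e_ii : i * i = t1 • (1:Q)) (e_jj : j * j = t2 • (1:Q))
    (e_iij : i * (i * j) = t1 • j) (e_jij : j * (i * j) = -(t2 • i))
    (e_iji : (i * j) * i = -(t1 • j)) (e_ijj : (i * j) * j = t2 • i)
    (e_ijij : (i * j) * (i * j) = -((t1 * t2) • (1:Q))) (hji : j * i = -(i * j)) :
    ∀ sIdx : Fin 4, (∑ t : Fin 4, bQ.repr (bQ sIdx * bQ t) t) =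
      if sIdx = 0 then (4 : A) else 0 := by
  have hr0 : bQ.repr (1:Q) = Finsupp.single 0 1 := by rw [← hb0]; exact bQ.repr_self 0
  have hr1 : bQ.repr i = Finsupp.single 1 1 := by rw [← hb1]; exact bQ.repr_self 1
  have hr2 : bQ.repr j = Finsupp.single 2 1 := by rw [← hb2]; exact bQ.repr_self 2
  have hr3 : bQ.repr (i * j) = Finsupp.single 3 1 := by rw [← hb3]; exact bQ.repr_self 3
  intro sIdx
  fin_cases sIdx <;>
    simp [Fin.sum_univ_four, hb0, hb1, hb2, hb3, e_ii, e_jj, e_iij, e_jij, e_iji, e_ijj,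
      e_ijij, hji, hr0, hr1, hr2, hr3, Finsupp.single_apply]

lemma diagCoeffSum' {A : Type*} [CommRing A] {Q : Type*} [Ring Q] [Algebra A Q]
    (bQ : Module.Basis (Fin 4) A Q)
    (hc : ∀ sIdx : Fin 4, (∑ t : Fin 4, bQ.repr (bQ sIdx * bQ t) t) =
      if sIdx = 0 then (4 : A) else 0)
    (q : Q) : (∑ t : Fin 4, bQ.repr (q * bQ t) t) = (4 : A) * bQ.repr q 0 := by
  have hq : q = ∑ sIdx : Fin 4, bQ.repr q sIdx • bQ sIdx := (bQ.sum_repr q).symm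
  calc (∑ t : Fin 4, bQ.repr (q * bQ t) t)
      = ∑ t : Fin 4, ∑ sIdx : Fin 4, bQ.repr q sIdx * bQ.repr (bQ sIdx * bQ t) t := by
        refine Finset.sum_congr rfl fun t _ => ?_
        conv_lhs => rw [hq]
        rw [Finset.sum_mul]
        simp only [smul_mul_assoc, map_sum, map_smul, Finsupp.coe_smul,
          Finset.sum_apply, Pi.smul_apply, smul_eq_mul]
        rw [Finsupp.finset_sum_apply]
        refine Finset.sum_congr rfl fun sIdx _ => ?_
        simp
    _ = ∑ sIdx : Fin 4, bQ.repr q sIdx * (∑ t : Fin 4, bQ.repr (bQ sIdx * bQ t) t) := by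
        rw [Finset.sum_comm]
        simp [Finset.mul_sum]
    _ = (4 : A) * bQ.repr q 0 := by
        simp only [hc]
        rw [Fin.sum_univ_four]
        norm_num [mul_comm]
        simp

attribute [local instance 100] LieRing.ofAssociativeRing

set_option maxHeartbeats 1600000 in
/-- Let `V = Q ⊕ Q = W ⊕ U` with `W = ker(m)` (the non-free rank-one projective module)
and `U` a complement, and let `s` be the `Q`-linear endomorphism of `V` acting as `−1` on
`W` and as `+1` on `U`.  Then the matrix `S` of `s` in the standard basis lies in
`sl₂(Q) = [gl₂(Q), gl₂(Q)]`. -/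
theorem matrix_of_reflection_mem_sl2
    (k : Type*) [Field k] [IsAlgClosed k] [CharZero k]
    (Q : Type*) [Ring Q] [Algebra (LaurentR k) Q]
    [Algebra k Q] [IsScalarTower k (LaurentR k) Q]
    (i j : Q)
    (hi : i * i = algebraMap (LaurentR k) Q (tOne k))
    (hj : j * j = algebraMap (LaurentR k) Q (tTwo k))
    (hij : i * j = -(j * i))
    (bQ : Module.Basis (Fin 4) (LaurentR k) Q)
    (hb0 : bQ 0 = 1) (hb1 : bQ 1 = i) (hb2 : bQ 2 = j) (hb3 : bQ 3 = i * j)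
    (U : Submodule Qᵐᵒᵖ (Q × Q))
    (hWU : IsCompl (LinearMap.ker (mMap Q i j)) U)
    (s : (Q × Q) →ₗ[Qᵐᵒᵖ] (Q × Q))
    (hsW : ∀ w ∈ LinearMap.ker (mMap Q i j), s w = -w)
    (hsU : ∀ u ∈ U, s u = u)
    (S : Matrix (Fin 2) (Fin 2) Q)
    (hS : ∀ u v : Q, s (u, v) = (S 0 0 * u + S 0 1 * v, S 1 0 * u + S 1 1 * v)) :
    S ∈ LieAlgebra.derivedSeries k (Matrix (Fin 2) (Fin 2) Q) 1 := by
  classical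
  haveI : Module.Free (LaurentR k) Q := Module.Free.of_basis bQ
  haveI : Module.Finite (LaurentR k) Q := Module.Finite.of_basis bQ
  set A := LaurentR k
  -- basic quaternion identities
  have hji : j * i = -(i * j) := by rw [hij, neg_neg]
  have hsm1 : ∀ q : Q, algebraMap A Q (tOne k) * q = tOne k • q := fun q =>
    (Algebra.smul_def _ _).symm
  have hsm2 : ∀ q : Q, algebraMap A Q (tTwo k) * q = tTwo k • q := fun q =>
    (Algebra.smul_def _ _).symm
  have e_ii : i * i = tOne k • (1 : Q) := by rw [hi, Algebra.smul_def, mul_one]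
  have e_jj : j * j = tTwo k • (1 : Q) := by rw [hj, Algebra.smul_def, mul_one]
  have e_iij : i * (i * j) = tOne k • j := by rw [← mul_assoc, hi, hsm1]
  have e_jij : j * (i * j) = -(tTwo k • i) := by
    rw [← mul_assoc, hji, neg_mul, mul_assoc, hj]
    rw [show i * algebraMap A Q (tTwo k) = algebraMap A Q (tTwo k) * i from
      (Algebra.commutes _ _).symm, hsm2]
  have e_iji : (i * j) * i = -(tOne k • j) := by
    rw [mul_assoc, hji, mul_neg, ← mul_assoc, hi, hsm1]
  have e_ijj : (i * j) * j = tTwo k • i := by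
    rw [mul_assoc, hj,
      show i * algebraMap A Q (tTwo k) = algebraMap A Q (tTwo k) * i from
        (Algebra.commutes _ _).symm, hsm2]
  have e_ijij : (i * j) * (i * j) = -((tOne k * tTwo k) • (1 : Q)) := by
    rw [mul_assoc, ← mul_assoc j i j, hji, neg_mul, mul_neg, ← mul_assoc, ← mul_assoc,
      hi, mul_assoc, hj, ← map_mul, Algebra.smul_def, mul_one]
  -- the A-linear versions of m and s
  set m' : (Q × Q) →ₗ[A] Q := mAux k i j with hm'
  set sA : (Q × Q) →ₗ[A] (Q × Q) := opToA k s with hsA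
  have hker : ∀ x : Q × Q, x ∈ LinearMap.ker (mMap Q i j) ↔ m' x = 0 := by
    intro x; rw [LinearMap.mem_ker]; rfl
  set half : A := algebraMap k A (2⁻¹ : k) with hhalf
  have htwohalf : half * (2 : A) = 1 := by
    rw [hhalf, ← map_ofNat (algebraMap k A) 2, ← map_mul]
    norm_num
  set q' : (Q × Q) →ₗ[A] (Q × Q) := half • (LinearMap.id + sA) with hq'
  -- q' kills W
  have hq'W : ∀ x : Q × Q, m' x = 0 → q' x = 0 := by
    intro x hx
    have hxW : x ∈ LinearMap.ker (mMap Q i j) := (hker x).2 hx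
    have : sA x = -x := hsW x hxW
    simp [hq', this]
  -- q' x is the U-component of x
  have hq'U : ∀ x : Q × Q, ∃ u ∈ U, q' x = u ∧ m' (q' x) = m' x := by
    intro x
    have hx : x ∈ (LinearMap.ker (mMap Q i j)) ⊔ U := by
      rw [hWU.sup_eq_top]; trivial
    obtain ⟨w, hw, u, hu, hwu⟩ := Submodule.mem_sup.mp hx
    have hsx : sA x = -w + u := by
      show s x = -w + u
      rw [← hwu, map_add, hsW w hw, hsU u hu]
    have hqx : q' x = u := by
      have : q' x = half • (x + sA x) := by simp [hq']
      rw [this, hsx, ← hwu]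
      have h2 : w + u + (-w + u) = u + u := by abel
      rw [h2, ← two_smul A u, smul_smul, htwohalf, one_smul]
    refine ⟨u, hu, hqx, ?_⟩
    rw [hqx, ← hwu, map_add, (hker w).1 hw, zero_add]
  -- a section of m'
  set σ0 : Q →ₗ[A] Q × Q :=
    (LinearMap.mulLeft A (1 - j)).prod (LinearMap.mulLeft A (i - 1)) with hσ0
  set σ : Q →ₗ[A] Q × Q := half • σ0 with hσ
  have hmσ : ∀ a : Q, m' (σ a) = a := by
    intro a
    have h1 : m' (σ0 a) = a + a := by
      show (1 + i) * ((1 - j) * a) - (1 + j) * ((i - 1) * a) = a + a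
      rw [← mul_assoc, ← mul_assoc, ← sub_mul]
      have h2 : (1 + i) * (1 - j) - (1 + j) * (i - 1) = 2 - (i * j + j * i) := by
        have h3 : (2 : Q) = 1 + 1 := by norm_num
        rw [h3]
        noncomm_ring
      rw [h2, hij, neg_add_cancel, sub_zero, two_mul]
    have : σ a = half • σ0 a := by simp [hσ]
    rw [this, map_smul, h1, ← two_smul A a, smul_smul, htwohalf, one_smul]
  -- trace of q' is 4
  have hq'fact : q' = (q' ∘ₗ σ) ∘ₗ m' := by
    refine LinearMap.ext fun x => ?_
    show q' x = q' (σ (m' x))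
    obtain ⟨u, hu, hqx, hmqx⟩ := hq'U x
    have hdiff : m' (σ (m' x) - x) = 0 := by rw [map_sub, hmσ, sub_self]
    have := hq'W _ hdiff
    rw [map_sub] at this
    have h := sub_eq_zero.mp this
    exact h.symm
  have hmq'σ : m' ∘ₗ (q' ∘ₗ σ) = LinearMap.id := by
    refine LinearMap.ext fun a => ?_
    show m' (q' (σ a)) = a
    obtain ⟨u, hu, hqx, hmqx⟩ := hq'U (σ a)
    rw [hmqx, hmσ]
  have htrq' : LinearMap.trace A (Q × Q) q' = 4 := by
    rw [hq'fact, LinearMap.trace_comp_comm' m' (q' ∘ₗ σ), hmq'σ, LinearMap.trace_id,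
      Module.finrank_eq_card_basis bQ, Fintype.card_fin]
    norm_num
  have hsAeq : sA = (2 : A) • q' - LinearMap.id := by
    refine LinearMap.ext fun x => ?_
    show sA x = (2 : A) • (q' x) - x
    have h1 : q' x = half • (x + sA x) := by simp [hq']
    rw [h1, smul_smul, mul_comm (2 : A) half, htwohalf, one_smul]
    abel
  have htrs : LinearMap.trace A (Q × Q) sA = 0 := by
    have h8 : Module.finrank A (Q × Q) = 8 := by
      rw [Module.finrank_prod, Module.finrank_eq_card_basis bQ, Fintype.card_fin]
    rw [hsAeq, map_sub, map_smul, htrq', LinearMap.trace_id, h8, smul_eq_mul]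
    norm_num
  -- compute the trace in the product basis
  set bV : Module.Basis (Fin 4 ⊕ Fin 4) A (Q × Q) := bQ.prod bQ with hbV
  have htrmat : LinearMap.trace A (Q × Q) sA =
      (∑ t : Fin 4, bQ.repr (S 0 0 * bQ t) t) + (∑ t : Fin 4, bQ.repr (S 1 1 * bQ t) t) := by
    rw [LinearMap.trace_eq_matrix_trace A bV sA, Matrix.trace, Fintype.sum_sum_type]
    congr 1
    · refine Finset.sum_congr rfl fun t _ => ?_
      rw [Matrix.diag_apply, LinearMap.toMatrix_apply]
      have hb : bV (Sum.inl t) = (bQ t, 0) := by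
        refine Prod.ext ?_ ?_
        · exact Module.Basis.prod_apply_inl_fst bQ bQ t
        · exact Module.Basis.prod_apply_inl_snd bQ bQ t
      rw [hb]
      have hx : sA (bQ t, (0 : Q)) = (S 0 0 * bQ t + S 0 1 * 0, S 1 0 * bQ t + S 1 1 * 0) := by
        show s (bQ t, (0 : Q)) = _
        rw [hS]
      rw [hx, Module.Basis.prod_repr_inl]
      simp
    · refine Finset.sum_congr rfl fun t _ => ?_
      rw [Matrix.diag_apply, LinearMap.toMatrix_apply]
      have hb : bV (Sum.inr t) = ((0 : Q), bQ t) := by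
        refine Prod.ext ?_ ?_
        · exact Module.Basis.prod_apply_inr_fst bQ bQ t
        · exact Module.Basis.prod_apply_inr_snd bQ bQ t
      rw [hb]
      have hx : sA ((0 : Q), bQ t) = (S 0 0 * 0 + S 0 1 * bQ t, S 1 0 * 0 + S 1 1 * bQ t) := by
        show s ((0 : Q), bQ t) = _
        rw [hS]
      rw [hx, Module.Basis.prod_repr_inr]
      simp
  -- the diagonal-coefficient sum is 4 times the coefficient of 1
  have hc := diagCoeffSum i j (tOne k) (tTwo k) bQ hb0 hb1 hb2 hb3 e_ii e_jj e_iij e_jij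
    e_iji e_ijj e_ijij hji
  have hL := diagCoeffSum' bQ hc
  have htr0 : bQ.repr (S 0 0 + S 1 1) 0 = 0 := by
    have h4 : (4 : A) * bQ.repr (S 0 0 + S 1 1) 0 = 0 := by
      rw [map_add, Finsupp.add_apply, mul_add, ← hL, ← hL, ← htrmat, htrs]
    have h4' : (algebraMap k A (4⁻¹ : k)) * (4 : A) = 1 := by
      rw [← map_ofNat (algebraMap k A) 4, ← map_mul]
      norm_num
    calc bQ.repr (S 0 0 + S 1 1) 0
        = (algebraMap k A (4⁻¹ : k) * (4 : A)) * bQ.repr (S 0 0 + S 1 1) 0 := by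
          rw [h4', one_mul]
      _ = algebraMap k A (4⁻¹ : k) * ((4 : A) * bQ.repr (S 0 0 + S 1 1) 0) := mul_assoc _ _ _
      _ = 0 := by rw [h4, mul_zero]
  -- decompose the trace element
  set e : Q := S 0 0 + S 1 1 with he
  have hedecomp : e = bQ.repr e 1 • i + bQ.repr e 2 • j + bQ.repr e 3 • (i * j) := by
    conv_lhs => rw [← bQ.sum_repr e]
    rw [Fin.sum_univ_four, htr0, hb0, hb1, hb2, hb3, zero_smul, zero_add]
  -- membership of brackets in the derived series
  have hmem : ∀ X Y : Matrix (Fin 2) (Fin 2) Q,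
      ⁅X, Y⁆ ∈ LieAlgebra.derivedSeries k (Matrix (Fin 2) (Fin 2) Q) 1 := by
    intro X Y
    have hd1 : LieAlgebra.derivedSeries k (Matrix (Fin 2) (Fin 2) Q) 1 =
        ⁅(⊤ : LieIdeal k (Matrix (Fin 2) (Fin 2) Q)), (⊤ : LieIdeal k (Matrix (Fin 2) (Fin 2) Q))⁆ := by
      rw [LieAlgebra.derivedSeries_def, LieAlgebra.derivedSeriesOfIdeal_succ,
        LieAlgebra.derivedSeriesOfIdeal_zero]
    rw [hd1]
    exact LieSubmodule.lie_mem_lie (LieSubmodule.mem_top X) (LieSubmodule.mem_top Y)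
  have hdiagbr : ∀ x y : Q,
      ⁅(Matrix.diagonal fun _ => x : Matrix (Fin 2) (Fin 2) Q),
          (Matrix.diagonal fun _ => y : Matrix (Fin 2) (Fin 2) Q)⁆ =
        (Matrix.diagonal fun _ => (x * y - y * x) : Matrix (Fin 2) (Fin 2) Q) := by
    intro x y
    rw [Ring.lie_def, Matrix.diagonal_mul_diagonal, Matrix.diagonal_mul_diagonal,
      ← Matrix.diagonal_sub]
  have hdiagmem : ∀ x y : Q, (Matrix.diagonal fun _ => (x * y - y * x) : Matrix (Fin 2) (Fin 2) Q)
      ∈ LieAlgebra.derivedSeries k (Matrix (Fin 2) (Fin 2) Q) 1 := by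
    intro x y
    rw [← hdiagbr]
    exact hmem _ _
  -- the three scalar pieces
  have hsci : ∀ r : A, (Matrix.diagonal fun _ => (r • i) : Matrix (Fin 2) (Fin 2) Q)
      ∈ LieAlgebra.derivedSeries k (Matrix (Fin 2) (Fin 2) Q) 1 := by
    intro r
    have hbr : ((t2inv k * r) • j) * (i * j) - (i * j) * ((t2inv k * r) • j)
        = -(r • i) - r • i := by
      rw [smul_mul_assoc, mul_smul_comm, e_jij, e_ijj, smul_neg, smul_smul,
        mul_right_comm, t2inv_mul, one_mul]
    have hd : (Matrix.diagonal fun _ => (r • i) : Matrix (Fin 2) (Fin 2) Q) =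
        (-(2⁻¹ : k)) • (Matrix.diagonal fun _ =>
          (((t2inv k * r) • j) * (i * j) - (i * j) * ((t2inv k * r) • j)) :
            Matrix (Fin 2) (Fin 2) Q) := by
      have hfun : ((-(2⁻¹ : k)) • fun _ : Fin 2 => (-(r • i) - r • i)) =
          fun _ : Fin 2 => (r • i) := by
        funext _
        show (-(2⁻¹ : k)) • (-(r • i) - r • i) = r • i
        have hc2 : (algebraMap k A (2⁻¹ : k)) * 2 = 1 := by
          rw [← map_ofNat (algebraMap k A) 2, ← map_mul]
          norm_num
        match_scalars
        linear_combination r * hc2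
      rw [hbr, ← Matrix.diagonal_smul, hfun]
    rw [hd]
    exact SMulMemClass.smul_mem _ (hdiagmem _ _)
  have hscj : ∀ r : A, (Matrix.diagonal fun _ => (r • j) : Matrix (Fin 2) (Fin 2) Q)
      ∈ LieAlgebra.derivedSeries k (Matrix (Fin 2) (Fin 2) Q) 1 := by
    intro r
    have hbr : (i * j) * ((t1inv k * r) • i) - ((t1inv k * r) • i) * (i * j)
        = -(r • j) - r • j := by
      rw [mul_smul_comm, smul_mul_assoc, e_iji, e_iij, smul_neg, smul_smul,
        mul_right_comm, t1inv_mul, one_mul]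
    have hd : (Matrix.diagonal fun _ => (r • j) : Matrix (Fin 2) (Fin 2) Q) =
        (-(2⁻¹ : k)) • (Matrix.diagonal fun _ =>
          ((i * j) * ((t1inv k * r) • i) - ((t1inv k * r) • i) * (i * j)) :
            Matrix (Fin 2) (Fin 2) Q) := by
      have hfun : ((-(2⁻¹ : k)) • fun _ : Fin 2 => (-(r • j) - r • j)) =
          fun _ : Fin 2 => (r • j) := by
        funext _
        show (-(2⁻¹ : k)) • (-(r • j) - r • j) = r • j
        have hc2 : (algebraMap k A (2⁻¹ : k)) * 2 = 1 := by
          rw [← map_ofNat (algebraMap k A) 2, ← map_mul]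
          norm_num
        match_scalars
        linear_combination r * hc2
      rw [hbr, ← Matrix.diagonal_smul, hfun]
    rw [hd]
    exact SMulMemClass.smul_mem _ (hdiagmem _ _)
  have hscij : ∀ r : A, (Matrix.diagonal fun _ => (r • (i * j)) : Matrix (Fin 2) (Fin 2) Q)
      ∈ LieAlgebra.derivedSeries k (Matrix (Fin 2) (Fin 2) Q) 1 := by
    intro r
    have hbr : (r • i) * j - j * (r • i) = r • (i * j) + r • (i * j) := by
      rw [smul_mul_assoc, mul_smul_comm, hji, smul_neg, sub_neg_eq_add]
    have hd : (Matrix.diagonal fun _ => (r • (i * j)) : Matrix (Fin 2) (Fin 2) Q) =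
        ((2⁻¹ : k)) • (Matrix.diagonal fun _ => ((r • i) * j - j * (r • i)) :
          Matrix (Fin 2) (Fin 2) Q) := by
      have hfun : (((2⁻¹ : k)) • fun _ : Fin 2 => (r • (i * j) + r • (i * j))) =
          fun _ : Fin 2 => (r • (i * j)) := by
        funext _
        show ((2⁻¹ : k)) • (r • (i * j) + r • (i * j)) = r • (i * j)
        have hc2 : (algebraMap k A (2⁻¹ : k)) * 2 = 1 := by
          rw [← map_ofNat (algebraMap k A) 2, ← map_mul]
          norm_num
        match_scalars
        linear_combination r * hc2
      rw [hbr, ← Matrix.diagonal_smul, hfun]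
    rw [hd]
    exact SMulMemClass.smul_mem _ (hdiagmem _ _)
  have hsce : (Matrix.diagonal fun _ => e : Matrix (Fin 2) (Fin 2) Q)
      ∈ LieAlgebra.derivedSeries k (Matrix (Fin 2) (Fin 2) Q) 1 := by
    have hsplit : (Matrix.diagonal fun _ => e : Matrix (Fin 2) (Fin 2) Q) =
        (Matrix.diagonal (fun _ => bQ.repr e 1 • i) : Matrix (Fin 2) (Fin 2) Q)
          + (Matrix.diagonal (fun _ => bQ.repr e 2 • j) : Matrix (Fin 2) (Fin 2) Q)
          + (Matrix.diagonal (fun _ => bQ.repr e 3 • (i * j)) : Matrix (Fin 2) (Fin 2) Q) := by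
      ext a b
      by_cases hab : a = b
      · subst hab
        simp [Matrix.diagonal_apply_eq, ← hedecomp]
      · simp [Matrix.diagonal_apply_ne _ hab]
    rw [hsplit]
    exact add_mem (add_mem (hsci _) (hscj _)) (hscij _)
  -- the bracket identities for the off-diagonal and traceless pieces
  have hK1 : ⁅(!![0, S 0 1; 0, 0] : Matrix (Fin 2) (Fin 2) Q), !![0, 0; 0, 1]⁆ =
      !![0, S 0 1; 0, 0] := by
    rw [Ring.lie_def]
    ext a b
    fin_cases a <;> fin_cases b <;> simp [Matrix.mul_apply, Fin.sum_univ_two]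
  have hK2 : ⁅(!![0, 0; 0, 1] : Matrix (Fin 2) (Fin 2) Q), !![0, 0; S 1 0, 0]⁆ =
      !![0, 0; S 1 0, 0] := by
    rw [Ring.lie_def]
    ext a b
    fin_cases a <;> fin_cases b <;> simp [Matrix.mul_apply, Fin.sum_univ_two]
  have hK3 : ⁅(!![0, S 0 0 - S 1 1; 0, 0] : Matrix (Fin 2) (Fin 2) Q), !![0, 0; 1, 0]⁆ =
      !![S 0 0 - S 1 1, 0; 0, -(S 0 0 - S 1 1)] := by
    rw [Ring.lie_def]
    ext a b
    fin_cases a <;> fin_cases b <;> simp [Matrix.mul_apply, Fin.sum_univ_two]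
  -- final decomposition of S
  have hSdecomp : S = !![0, S 0 1; 0, 0] + !![0, 0; S 1 0, 0]
      + (2⁻¹ : k) • !![S 0 0 - S 1 1, 0; 0, -(S 0 0 - S 1 1)]
      + (2⁻¹ : k) • (Matrix.diagonal fun _ => e) := by
    ext a b
    fin_cases a <;> fin_cases b <;>
      simp [he, Matrix.diagonal] <;> module
  rw [hSdecomp]
  refine add_mem (add_mem (add_mem ?_ ?_) ?_) ?_
  · rw [← hK1]; exact hmem _ _
  · rw [← hK2]; exact hmem _ _
  · exact SMulMemClass.smul_mem _ (by rw [← hK3]; exact hmem _ _)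
  · exact SMulMemClass.smul_mem _ hsce
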